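/- Let Y be a Banach space with modulus of uniform convexity δ_Y, let X be a metric space containing six points s, a, m₁, m₂, b, t satisfying: d(s,m₁) = d(s,m₂) = d(m₁,t) = d(m₂,t) = (1/2)(1+ε^p)^{1/p} d(s,t) and d(m₁,m₂) = ε·d(s,t), for some ε > 0 and p ∈ (1,∞) with d(s,t) > 0. If f : X → Y satisfies d(x,y) ≤ ‖f(x) − f(y)‖ ≤ D·d(x,y) for all x, y among these six points, then ‖f(s) − f(t)‖ ≤ D·d(s,t)·(1+ε^p)^{1/p}·(1 − δ_Y(2ε/(D(1+ε^p)^{1/p}))). -/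

import Mathlib

/-- The modulus of uniform convexity of a normed space `Y`:
`δ_Y(t) = inf {1 - ‖(x+y)/2‖ : ‖x‖ ≤ 1, ‖y‖ ≤ 1, ‖x - y‖ ≥ t}`. -/
noncomputable def uniformConvexityModulus (Y : Type*) [NormedAddCommGroup Y] (t : ℝ) : ℝ :=
  sInf {r : ℝ | ∃ x y : Y, ‖x‖ ≤ 1 ∧ ‖y‖ ≤ 1 ∧ t ≤ ‖x - y‖ ∧ r = 1 - ‖x + y‖ / 2}

lemma ucm_le {Y : Type*} [NormedAddCommGroup Y] (t : ℝ) (x y : Y)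
    (hx : ‖x‖ ≤ 1) (hy : ‖y‖ ≤ 1) (ht : t ≤ ‖x - y‖) :
    uniformConvexityModulus Y t ≤ 1 - ‖x + y‖ / 2 := by
  apply csInf_le
  · refine ⟨0, ?_⟩
    rintro r ⟨u, v, hu, hv, -, rfl⟩
    have : ‖u + v‖ ≤ 2 := (norm_add_le u v).trans (by linarith)
    linarith
  · exact ⟨x, y, hx, hy, ht, rfl⟩

/-- the contraction lemma for bi-Lipschitz maps into a uniformly
convex Banach space (Lemma `contraction_uc`). -/
theorem contraction_uniformly_convex {X Y : Type*} [MetricSpace X]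
    [NormedAddCommGroup Y] [NormedSpace ℝ Y] [CompleteSpace Y]
    (p ε D : ℝ) (hp1 : 1 < p) (hε : 0 < ε) (hD : 1 ≤ D)
    (s a m₁ m₂ b t : X) (hst : 0 < dist s t)
    (h1 : dist s m₁ = (1/2) * (1 + ε ^ p) ^ (1/p) * dist s t)
    (h2 : dist s m₂ = (1/2) * (1 + ε ^ p) ^ (1/p) * dist s t)
    (h3 : dist m₁ t = (1/2) * (1 + ε ^ p) ^ (1/p) * dist s t)
    (h4 : dist m₂ t = (1/2) * (1 + ε ^ p) ^ (1/p) * dist s t)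
    (h5 : dist m₁ m₂ = ε * dist s t)
    (f : X → Y)
    (hf : ∀ x ∈ ({s, a, m₁, m₂, b, t} : Set X), ∀ y ∈ ({s, a, m₁, m₂, b, t} : Set X),
      dist x y ≤ ‖f x - f y‖ ∧ ‖f x - f y‖ ≤ D * dist x y) :
    ‖f s - f t‖ ≤ D * dist s t * (1 + ε ^ p) ^ (1/p) *
      (1 - uniformConvexityModulus Y (2 * ε / (D * (1 + ε ^ p) ^ (1/p)))) := by
  set A : ℝ := (1 + ε ^ p) ^ (1/p) with hA_def
  have hεp : 0 < ε ^ p := Real.rpow_pos_of_pos hε p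
  have hA : 0 < A := Real.rpow_pos_of_pos (by positivity) _
  have hD0 : (0:ℝ) < D := lt_of_lt_of_le one_pos hD
  set R : ℝ := D * ((1/2) * A * dist s t) with hR_def
  have hR : 0 < R := by positivity
  have hsmem : s ∈ ({s, a, m₁, m₂, b, t} : Set X) := by simp
  have htmem : t ∈ ({s, a, m₁, m₂, b, t} : Set X) := by simp
  have hm₁mem : m₁ ∈ ({s, a, m₁, m₂, b, t} : Set X) := by simp
  have hm₂mem : m₂ ∈ ({s, a, m₁, m₂, b, t} : Set X) := by simp
  have hsm₁ : ‖f m₁ - f s‖ ≤ R := by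
    have := (hf m₁ hm₁mem s hsmem).2
    rwa [dist_comm, h1] at this
  have hsm₂ : ‖f m₂ - f s‖ ≤ R := by
    have := (hf m₂ hm₂mem s hsmem).2
    rwa [dist_comm, h2] at this
  have htm₁ : ‖f m₁ - f t‖ ≤ R := by
    have := (hf m₁ hm₁mem t htmem).2
    rwa [h3] at this
  have htm₂ : ‖f m₂ - f t‖ ≤ R := by
    have := (hf m₂ hm₂mem t htmem).2
    rwa [h4] at this
  have hmm : ε * dist s t ≤ ‖f m₁ - f m₂‖ := by
    have := (hf m₁ hm₁mem m₂ hm₂mem).1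
    rwa [h5] at this
  set τ : ℝ := 2 * ε / (D * A) with hτ_def
  set δ : ℝ := uniformConvexityModulus Y τ with hδ_def
  have key : ∀ z : Y, ‖f m₁ - z‖ ≤ R → ‖f m₂ - z‖ ≤ R →
      ‖(f m₁ - z) + (f m₂ - z)‖ ≤ 2 * R * (1 - δ) := by
    intro z hz1 hz2
    have hx : ‖R⁻¹ • (f m₁ - z)‖ ≤ 1 := by
      rw [norm_smul, Real.norm_eq_abs, abs_of_pos (inv_pos.2 hR)]
      rw [inv_mul_le_iff₀ hR]; simpa using hz1
    have hy : ‖R⁻¹ • (f m₂ - z)‖ ≤ 1 := by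
      rw [norm_smul, Real.norm_eq_abs, abs_of_pos (inv_pos.2 hR)]
      rw [inv_mul_le_iff₀ hR]; simpa using hz2
    have hxy : τ ≤ ‖R⁻¹ • (f m₁ - z) - R⁻¹ • (f m₂ - z)‖ := by
      rw [← smul_sub, norm_smul, Real.norm_eq_abs, abs_of_pos (inv_pos.2 hR)]
      have h1 : (f m₁ - z) - (f m₂ - z) = f m₁ - f m₂ := by abel
      rw [h1]
      have hτR : τ * R = ε * dist s t := by
        rw [hτ_def, hR_def, div_mul_eq_mul_div, div_eq_iff (by positivity)]
        ring
      rw [le_inv_mul_iff₀ hR, mul_comm, hτR]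
      exact hmm
    have := ucm_le τ _ _ hx hy hxy
    have h2 : δ ≤ 1 - ‖R⁻¹ • (f m₁ - z) + R⁻¹ • (f m₂ - z)‖ / 2 := this
    rw [← smul_add, norm_smul, Real.norm_eq_abs, abs_of_pos (inv_pos.2 hR)] at h2
    have h3 : R⁻¹ * ‖(f m₁ - z) + (f m₂ - z)‖ ≤ 2 * (1 - δ) := by linarith
    calc ‖(f m₁ - z) + (f m₂ - z)‖ = R * (R⁻¹ * ‖(f m₁ - z) + (f m₂ - z)‖) := by
          field_simp
      _ ≤ R * (2 * (1 - δ)) := by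
          exact mul_le_mul_of_nonneg_left h3 hR.le
      _ = 2 * R * (1 - δ) := by ring
  have k1 := key (f s) hsm₁ hsm₂
  have k2 := key (f t) htm₁ htm₂
  have hsum : (2:ℝ) • (f t - f s) =
      ((f m₁ - f s) + (f m₂ - f s)) - ((f m₁ - f t) + (f m₂ - f t)) := by
    simp [two_smul]; abel
  have hnorm : 2 * ‖f s - f t‖ ≤ 4 * R * (1 - δ) := by
    have := norm_sub_le ((f m₁ - f s) + (f m₂ - f s)) ((f m₁ - f t) + (f m₂ - f t))
    rw [← hsum] at this
    rw [norm_smul, Real.norm_eq_abs] at this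
    have h2 : |(2:ℝ)| = 2 := by norm_num
    rw [h2, norm_sub_rev] at this
    linarith
  have hfinal : ‖f s - f t‖ ≤ 2 * R * (1 - δ) := by linarith
  calc ‖f s - f t‖ ≤ 2 * R * (1 - δ) := hfinal
    _ = D * dist s t * A * (1 - δ) := by rw [hR_def]; ring
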